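/- arXiv:0908.3850 — 2 statements merged into one kernel-verified Lean document; each statement's English description precedes it below -/
import Mathlib

section
/- Let G = (V,E) be a finite simple graph. For all real numbers β and γ: Σ_{s ⊆ E} β^{|s|} · Π_{i ∈ V} f_{deg_s(i)}(γ) = Σ_{s ⊆ E} β^{|s|} · (1-β)^{|E|-|s|} · Π_{K} g_{n(K)}(γ), where the product is over the connected components K of the spanning subgraph (V,s), n(K) is the nullity of K, and g_m(γ) := Σ_{k=0}^{m} C(m,k)·f_{2k}(γ). -/
open Polynomial

attribute [local instance] Classical.propDecidable

/-- The polynomials `f₀ = 1`, `f₁ = 0`, `f_{n+1}(x) = x·f_n(x) + f_{n-1}(x)`. -/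
noncomputable def isingF : ℕ → Polynomial ℤ
  | 0 => 1
  | 1 => 0
  | n + 2 => X * isingF (n + 1) + isingF n

/-- The degree of vertex `i` in the spanning subgraph `(V, s)`. -/
noncomputable def degIn {V : Type*} (s : Finset (Sym2 V)) (i : V) : ℕ :=
  (s.filter (fun e => i ∈ e)).card

/-- The spanning subgraph `(V, s)` determined by an edge set `s`. -/
noncomputable def subSpan {V : Type*} (s : Finset (Sym2 V)) : SimpleGraph V :=
  SimpleGraph.fromEdgeSet ↑s

/-- Number of edges of `s` lying in the connected component `K` of `(V, s)`. -/
noncomputable def compEdges {V : Type*} (s : Finset (Sym2 V))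
    (K : (subSpan s).ConnectedComponent) : ℕ :=
  (s.filter (fun e => ∀ v ∈ e, (subSpan s).connectedComponentMk v = K)).card

/-- Number of vertices in the connected component `K` of `(V, s)`. -/
noncomputable def compVerts {V : Type*} (s : Finset (Sym2 V))
    (K : (subSpan s).ConnectedComponent) : ℕ :=
  Nat.card {v : V // (subSpan s).connectedComponentMk v = K}

/-- Nullity (#edges − #vertices + 1) of the connected component `K` of `(V, s)`. -/
noncomputable def compNullity {V : Type*} (s : Finset (Sym2 V))
    (K : (subSpan s).ConnectedComponent) : ℕ :=
  compEdges s K + 1 - compVerts s K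

namespace ThetaAux

set_option linter.unusedSectionVars false

lemma filter_ext {α : Type*} (s : Finset α) (p : α → Prop) {h1 h2 : DecidablePred p} :
    @Finset.filter α p h1 s = @Finset.filter α p h2 s := by
  have : h1 = h2 := funext fun x => Subsingleton.elim _ _
  subst this; rfl

/-! ### Real-number layer -/

noncomputable def sq (γ : ℝ) : ℝ := Real.sqrt (γ * γ + 4)

noncomputable def lam (γ : ℝ) : Bool → ℝ := fun b => if b then (γ + sq γ) / 2 else (γ - sq γ) / 2

noncomputable def wt (γ : ℝ) : Bool → ℝ :=
  fun b => if b then -((γ - sq γ) / 2) / sq γ else ((γ + sq γ) / 2) / sq γ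

lemma sq_pos (γ : ℝ) : 0 < sq γ := Real.sqrt_pos.2 (by nlinarith [sq_nonneg γ])

lemma sq_sq (γ : ℝ) : sq γ * sq γ = γ * γ + 4 :=
  Real.mul_self_sqrt (by nlinarith [sq_nonneg γ])

lemma lam_sq (γ : ℝ) (b : Bool) : lam γ b * lam γ b = γ * lam γ b + 1 := by
  have h := sq_sq γ
  cases b <;> simp only [lam, if_true, if_false, Bool.false_eq_true] <;> linear_combination h / 4

lemma wt_sum (γ : ℝ) : wt γ true + wt γ false = 1 := by
  have h := sq_pos γ
  simp only [wt, if_true, if_false, Bool.false_eq_true]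
  field_simp
  ring

lemma wt_lam_sum (γ : ℝ) : wt γ true * lam γ true + wt γ false * lam γ false = 0 := by
  have h := sq_pos γ
  simp only [wt, lam, if_true, if_false, Bool.false_eq_true]
  field_simp
  ring

lemma wt_B (γ : ℝ) (b : Bool) : wt γ b * (1 + lam γ b * lam γ b) = 1 := by
  have h := sq_pos γ
  have h2 := sq_sq γ
  cases b <;> simp only [wt, lam, if_true, if_false, Bool.false_eq_true] <;> field_simp <;>
    nlinarith [h, h2]

lemma lam_mul_ne (γ : ℝ) (a b : Bool) (hab : a ≠ b) : 1 + lam γ a * lam γ b = 0 := by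
  have h2 := sq_sq γ
  cases a <;> cases b <;> simp_all [lam] <;> nlinarith [h2]

lemma aeval_isingF (γ : ℝ) (n : ℕ) :
    (aeval γ (isingF n) : ℝ) = wt γ true * lam γ true ^ n + wt γ false * lam γ false ^ n := by
  induction n using Nat.twoStepInduction with
  | zero => simpa [isingF] using (wt_sum γ).symm
  | one => simpa [isingF] using (wt_lam_sum γ).symm
  | more n ih1 ih2 =>
    have e1 := lam_sq γ true
    have e2 := lam_sq γ false
    simp only [isingF, map_add, map_mul, aeval_X, ih1, ih2]
    linear_combination (-(wt γ true * lam γ true ^ n)) * e1 + (-(wt γ false * lam γ false ^ n)) * e2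

/-- Per-component identity. -/
lemma comp_sum (γ : ℝ) (v e : ℕ) (hv : 1 ≤ v) (hve : v ≤ e + 1) :
    wt γ true ^ v * (1 + lam γ true * lam γ true) ^ e
      + wt γ false ^ v * (1 + lam γ false * lam γ false) ^ e
    = ∑ k ∈ Finset.range ((e + 1 - v) + 1),
        (((e + 1 - v).choose k : ℝ)) * (aeval γ (isingF (2 * k)) : ℝ) := by
  set n := e + 1 - v with hn
  have he : e = (v - 1) + n := by omega
  have hterm : ∀ b : Bool, wt γ b ^ v * (1 + lam γ b * lam γ b) ^ e
      = wt γ b * (1 + lam γ b * lam γ b) ^ n := by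
    intro b
    have hv' : v = (v - 1) + 1 := by omega
    calc wt γ b ^ v * (1 + lam γ b * lam γ b) ^ e
        = (wt γ b * (1 + lam γ b * lam γ b)) ^ (v - 1)
            * (wt γ b * (1 + lam γ b * lam γ b) ^ n) := by
          rw [he]; nth_rewrite 1 [hv']
          rw [pow_add, pow_add, mul_pow, pow_one]; ring
      _ = wt γ b * (1 + lam γ b * lam γ b) ^ n := by rw [wt_B, one_pow, one_mul]
  rw [hterm true, hterm false]
  have hbin : ∀ b : Bool, (1 + lam γ b * lam γ b) ^ n
      = ∑ k ∈ Finset.range (n + 1), ((n.choose k : ℝ)) * (lam γ b * lam γ b) ^ k := by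
    intro b
    rw [add_comm (1 : ℝ), add_pow]
    exact Finset.sum_congr rfl fun k _ => by rw [one_pow, mul_one]; ring
  rw [hbin true, hbin false, Finset.mul_sum, Finset.mul_sum, ← Finset.sum_add_distrib]
  refine Finset.sum_congr rfl fun k _ => ?_
  rw [aeval_isingF]
  have hp : ∀ b : Bool, lam γ b ^ (2 * k) = (lam γ b * lam γ b) ^ k := by
    intro b; rw [pow_mul, pow_two]
  rw [hp true, hp false]
  ring

/-! ### Graph layer -/

variable {V : Type*} [Fintype V] [DecidableEq V]

lemma compVerts_eq (s : Finset (Sym2 V)) (K : (subSpan s).ConnectedComponent) :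
    compVerts s K
      = (Finset.univ.filter fun v => (subSpan s).connectedComponentMk v = K).card := by
  rw [compVerts, Nat.card_eq_fintype_card, Fintype.card_subtype]
  all_goals exact congrArg Finset.card (filter_ext _ _)

lemma compVerts_pos (s : Finset (Sym2 V)) (K : (subSpan s).ConnectedComponent) :
    1 ≤ compVerts s K := by
  obtain ⟨r, hr⟩ := K.exists_rep
  have hr' : (subSpan s).connectedComponentMk r = K := hr
  rw [compVerts_eq]
  exact Finset.card_pos.2 ⟨r, Finset.mem_filter.2 ⟨Finset.mem_univ r, hr'⟩⟩

lemma exists_adj_closer (G' : SimpleGraph V) {u r : V} (h : G'.Reachable u r) (hne : u ≠ r) :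
    ∃ w, G'.Adj u w ∧ G'.dist w r < G'.dist u r := by
  obtain ⟨p, hp⟩ := h.exists_walk_length_eq_dist
  cases p with
  | nil => exact absurd rfl hne
  | @cons _ w _ ha q =>
      refine ⟨w, ha, ?_⟩
      have h1 := G'.dist_le q
      simp only [SimpleGraph.Walk.length_cons] at hp
      omega

lemma compVerts_le (s : Finset (Sym2 V)) (K : (subSpan s).ConnectedComponent) :
    compVerts s K ≤ compEdges s K + 1 := by
  obtain ⟨r, hr0⟩ := K.exists_rep
  have hr : (subSpan s).connectedComponentMk r = K := hr0
  have hce : compEdges s K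
      = (s.filter fun e => ∀ v ∈ e, (subSpan s).connectedComponentMk v = K).card := by
    rw [compEdges]
    exact congrArg Finset.card (filter_ext _ _)
  let nxt : V → V := fun v =>
    if h : (subSpan s).Reachable v r ∧ v ≠ r then
      Classical.choose (exists_adj_closer (subSpan s) h.1 h.2) else v
  have hnxt : ∀ v, (subSpan s).Reachable v r → v ≠ r →
      (subSpan s).Adj v (nxt v) ∧ (subSpan s).dist (nxt v) r < (subSpan s).dist v r := by
    intro v h1 h2
    have he : nxt v = Classical.choose (exists_adj_closer (subSpan s) h1 h2) := by
      simp only [nxt, dif_pos (And.intro h1 h2)]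
    rw [he]
    exact Classical.choose_spec (exists_adj_closer (subSpan s) h1 h2)
  have hreach : ∀ v, (subSpan s).connectedComponentMk v = K → v ≠ r →
      (subSpan s).Reachable v r := by
    intro v hv hvr
    exact SimpleGraph.ConnectedComponent.exact (hv.trans hr.symm)
  have hcard :
      ((Finset.univ.filter fun v => (subSpan s).connectedComponentMk v = K) \ {r}).card
        ≤ (s.filter fun e => ∀ v ∈ e, (subSpan s).connectedComponentMk v = K).card := by
    apply Finset.card_le_card_of_injOn (fun v => s(v, nxt v))
    · intro v hv
      rw [Finset.mem_coe, Finset.mem_sdiff, Finset.mem_filter, Finset.mem_singleton] at hv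
      obtain ⟨⟨-, hmkv⟩, hvr⟩ := hv
      have h1 := hreach v hmkv hvr
      obtain ⟨hadj, -⟩ := hnxt v h1 hvr
      have hadj' := hadj
      rw [subSpan, SimpleGraph.fromEdgeSet_adj] at hadj'
      refine Finset.mem_filter.2 ⟨hadj'.1, ?_⟩
      intro x hx
      rcases Sym2.mem_iff.1 hx with rfl | rfl
      · exact hmkv
      · exact (SimpleGraph.ConnectedComponent.connectedComponentMk_eq_of_adj hadj).symm.trans hmkv
    · intro v1 hv1 v2 hv2 heq
      simp only [Sym2.eq_iff] at heq
      rcases heq with ⟨h, -⟩ | ⟨h1, h2⟩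
      · exact h
      · exfalso
        rw [Finset.mem_coe, Finset.mem_sdiff, Finset.mem_filter, Finset.mem_singleton] at hv1 hv2
        have d1 := (hnxt v1 (hreach v1 hv1.1.2 hv1.2) hv1.2).2
        have d2 := (hnxt v2 (hreach v2 hv2.1.2 hv2.2) hv2.2).2
        rw [h2] at d1
        rw [← h1] at d2
        omega
  have hrD : r ∈ Finset.univ.filter fun v => (subSpan s).connectedComponentMk v = K :=
    Finset.mem_filter.2 ⟨Finset.mem_univ r, hr⟩
  have hsplit :
      ((Finset.univ.filter fun v => (subSpan s).connectedComponentMk v = K) \ {r}).card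
        = (Finset.univ.filter fun v => (subSpan s).connectedComponentMk v = K).card - 1 := by
    rw [Finset.sdiff_singleton_eq_erase, Finset.card_erase_of_mem hrD]
  have hpos : 1 ≤ (Finset.univ.filter fun v => (subSpan s).connectedComponentMk v = K).card :=
    Finset.card_pos.2 ⟨r, hrD⟩
  rw [compVerts_eq, hce]
  omega

/-! ### Spin expansion -/

noncomputable def ev (γ : ℝ) (σ : V → Bool) : Sym2 V → ℝ :=
  Sym2.lift ⟨fun a b => lam γ (σ a) * lam γ (σ b), fun a b => mul_comm _ _⟩

@[simp] lemma ev_mk (γ : ℝ) (σ : V → Bool) (a b : V) :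
    ev γ σ s(a, b) = lam γ (σ a) * lam γ (σ b) := rfl

lemma prod_pow_deg (γ : ℝ) (σ : V → Bool) (t : Finset (Sym2 V)) (ht : ∀ e ∈ t, ¬ e.IsDiag) :
    ∏ i : V, lam γ (σ i) ^ degIn t i = ∏ e ∈ t, ev γ σ e := by
  have h1 : ∀ i : V, lam γ (σ i) ^ degIn t i
      = ∏ e ∈ t.filter (fun e => i ∈ e), lam γ (σ i) := by
    intro i
    rw [Finset.prod_const]
    congr 1
    rw [degIn]
    exact congrArg Finset.card (filter_ext _ _)
  calc ∏ i : V, lam γ (σ i) ^ degIn t i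
      = ∏ i : V, ∏ e ∈ t.filter (fun e => i ∈ e), lam γ (σ i) :=
        Finset.prod_congr rfl fun i _ => h1 i
    _ = ∏ e ∈ t, ∏ i ∈ Finset.univ.filter (fun i => i ∈ e), lam γ (σ i) := by
        apply Finset.prod_comm'
        intro i e
        simp only [Finset.mem_univ, Finset.mem_filter, true_and]
        tauto
    _ = ∏ e ∈ t, ev γ σ e := by
        refine Finset.prod_congr rfl ?_
        intro e he
        have hd := ht e he
        revert hd
        refine Sym2.inductionOn e ?_
        intro a b hd
        have hab : a ≠ b := fun h => hd (by simp [h])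
        have hset : Finset.univ.filter (fun i => i ∈ s(a, b)) = {a, b} := by
          ext i
          simp [Sym2.mem_iff]
        rw [hset, Finset.prod_pair hab, ev_mk]

lemma exists_adj_ne (G' : SimpleGraph V) (σ : V → Bool) {a b : V} (w : G'.Walk a b)
    (hne : σ a ≠ σ b) : ∃ u v, G'.Adj u v ∧ σ u ≠ σ v := by
  induction w with
  | nil => exact absurd rfl hne
  | @cons a c b ha p ih =>
      by_cases h : σ a = σ c
      · exact ih (fun hcb => hne (h.trans hcb))
      · exact ⟨a, c, ha, h⟩

/-- The key identity: sum over subgraphs of products of Fibonacci-type vertex weights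
equals the product over connected components. -/
lemma key (s : Finset (Sym2 V)) (hs : ∀ e ∈ s, ¬ e.IsDiag) (γ : ℝ) :
    ∑ t ∈ s.powerset, ∏ i : V, (aeval γ (isingF (degIn t i)) : ℝ)
      = ∏ᶠ K : (subSpan s).ConnectedComponent,
          ∑ k ∈ Finset.range (compNullity s K + 1),
            ((compNullity s K).choose k : ℝ) * (aeval γ (isingF (2 * k)) : ℝ) := by
  have main1 : ∀ t ∈ s.powerset,
      ∏ i : V, (aeval γ (isingF (degIn t i)) : ℝ)
        = ∑ σ : V → Bool, ∏ i : V, (wt γ (σ i) * lam γ (σ i) ^ degIn t i) := by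
    intro t _
    have h1 : ∀ i : V, (aeval γ (isingF (degIn t i)) : ℝ)
        = ∑ b : Bool, wt γ b * lam γ b ^ degIn t i := by
      intro i
      rw [aeval_isingF, Fintype.sum_bool]
    rw [Finset.prod_congr rfl fun i _ => h1 i, Finset.prod_univ_sum]
    rw [Fintype.piFinset_univ]
  have main2 : ∀ σ : V → Bool,
      ∑ t ∈ s.powerset, ∏ i : V, (wt γ (σ i) * lam γ (σ i) ^ degIn t i)
        = (∏ i : V, wt γ (σ i)) * ∏ e ∈ s, (1 + ev γ σ e) := by
    intro σ
    have h1 : ∀ t ∈ s.powerset, ∏ i : V, (wt γ (σ i) * lam γ (σ i) ^ degIn t i)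
        = (∏ i : V, wt γ (σ i)) * ∏ e ∈ t, ev γ σ e := by
      intro t ht
      rw [Finset.prod_mul_distrib,
        prod_pow_deg γ σ t (fun e he => hs e (Finset.mem_powerset.1 ht he))]
    rw [Finset.sum_congr rfl h1, ← Finset.mul_sum]
    congr 1
    have h2 := Finset.prod_add (fun e => ev γ σ e) (fun _ => (1 : ℝ)) s
    simp only [Finset.prod_const_one, mul_one] at h2
    rw [← h2]
    exact (Finset.prod_congr rfl fun e _ => (add_comm _ _)).symm
  rw [Finset.sum_congr rfl main1, Finset.sum_comm, Finset.sum_congr rfl fun σ _ => main2 σ]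
  -- kill spin configurations not constant on components
  have bad : ∀ σ : V → Bool,
      (¬ ∀ a b : V, (subSpan s).connectedComponentMk a = (subSpan s).connectedComponentMk b
        → σ a = σ b) →
      (∏ i : V, wt γ (σ i)) * ∏ e ∈ s, (1 + ev γ σ e) = 0 := by
    intro σ hσ
    push_neg at hσ
    obtain ⟨a, b, hab, hne⟩ := hσ
    obtain ⟨u, v, huv, hsuv⟩ :=
      exists_adj_ne (subSpan s) σ (SimpleGraph.ConnectedComponent.exact hab).some hne
    have he : s(u, v) ∈ s ∧ u ≠ v := by
      have := huv
      rw [subSpan, SimpleGraph.fromEdgeSet_adj] at this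
      exact ⟨this.1, this.2⟩
    have hzero : (1 : ℝ) + ev γ σ s(u, v) = 0 := by
      rw [ev_mk]
      exact lam_mul_ne γ _ _ hsuv
    rw [Finset.prod_eq_zero he.1 hzero, mul_zero]
  -- reindex over components
  have reindex :
      ∑ σ : V → Bool, (∏ i : V, wt γ (σ i)) * ∏ e ∈ s, (1 + ev γ σ e)
        = ∑ τ : (subSpan s).ConnectedComponent → Bool,
            (∏ i : V, wt γ (τ ((subSpan s).connectedComponentMk i)))
              * ∏ e ∈ s, (1 + ev γ (fun v => τ ((subSpan s).connectedComponentMk v)) e) := by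
    rw [← Finset.sum_filter_add_sum_filter_not Finset.univ
      (fun σ : V → Bool => ∀ a b : V,
        (subSpan s).connectedComponentMk a = (subSpan s).connectedComponentMk b → σ a = σ b)]
    have hz : ∑ σ ∈ Finset.univ.filter (fun σ : V → Bool => ¬ ∀ a b : V,
        (subSpan s).connectedComponentMk a = (subSpan s).connectedComponentMk b → σ a = σ b),
        (∏ i : V, wt γ (σ i)) * ∏ e ∈ s, (1 + ev γ σ e) = 0 := by
      apply Finset.sum_eq_zero
      intro σ hσ
      exact bad σ (Finset.mem_filter.1 hσ).2
    rw [hz, add_zero]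
    apply Finset.sum_nbij' (i := fun σ (K : (subSpan s).ConnectedComponent) => σ K.out)
      (j := fun τ (v : V) => τ ((subSpan s).connectedComponentMk v))
    · intro σ _
      exact Finset.mem_univ _
    · intro τ _
      refine Finset.mem_filter.2 ⟨Finset.mem_univ _, ?_⟩
      intro a b hab
      show τ ((subSpan s).connectedComponentMk a) = τ ((subSpan s).connectedComponentMk b)
      rw [hab]
    · intro σ hσ
      have hg := (Finset.mem_filter.1 hσ).2
      funext v
      show σ (Quot.out ((subSpan s).connectedComponentMk v)) = σ v
      exact hg _ _ (Quot.out_eq _)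
    · intro τ _
      funext K
      show τ ((subSpan s).connectedComponentMk (Quot.out K)) = τ K
      exact congrArg τ (Quot.out_eq K)
    · intro σ hσ
      have hg := (Finset.mem_filter.1 hσ).2
      have hfun : ∀ v, σ (Quot.out ((subSpan s).connectedComponentMk v)) = σ v := by
        intro v
        exact hg _ _ (Quot.out_eq _)
      simp only [hfun]
  rw [reindex]
  -- compute the value for component-constant spins
  have comp3 : ∀ τ : (subSpan s).ConnectedComponent → Bool,
      (∏ i : V, wt γ (τ ((subSpan s).connectedComponentMk i)))
        * ∏ e ∈ s, (1 + ev γ (fun v => τ ((subSpan s).connectedComponentMk v)) e)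
      = ∏ K : (subSpan s).ConnectedComponent,
          (wt γ (τ K) ^ compVerts s K
            * (1 + lam γ (τ K) * lam γ (τ K)) ^ compEdges s K) := by
    intro τ
    rw [Finset.prod_mul_distrib]
    congr 1
    · rw [← Finset.prod_fiberwise' Finset.univ ((subSpan s).connectedComponentMk)
        (fun K => wt γ (τ K))]
      refine Finset.prod_congr rfl fun K _ => ?_
      rw [Finset.prod_const]
      congr 1
      rw [compVerts_eq]
      all_goals exact congrArg Finset.card (filter_ext _ _)
    · rw [← Finset.prod_fiberwise s
        (fun e => (subSpan s).connectedComponentMk (Quot.out e).1)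
        (fun e => 1 + ev γ (fun v => τ ((subSpan s).connectedComponentMk v)) e)]
      refine Finset.prod_congr rfl fun K _ => ?_
      have hout : ∀ e ∈ s, e = s((Quot.out e).1, (Quot.out e).2) := by
        intro e _
        conv_lhs => rw [← Quot.out_eq e]
      have hadj : ∀ e ∈ s, (subSpan s).Adj (Quot.out e).1 (Quot.out e).2 := by
        intro e he
        have hnd := hs e he
        rw [hout e he] at hnd
        have hne : (Quot.out e).1 ≠ (Quot.out e).2 := fun h => hnd (by simp [h])
        rw [subSpan, SimpleGraph.fromEdgeSet_adj]
        exact ⟨by rw [← hout e he]; exact he, hne⟩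
      have hconst : ∀ e ∈ s.filter (fun e =>
          (subSpan s).connectedComponentMk (Quot.out e).1 = K),
          1 + ev γ (fun v => τ ((subSpan s).connectedComponentMk v)) e
            = 1 + lam γ (τ K) * lam γ (τ K) := by
        intro e he'
        obtain ⟨he, hKe⟩ := Finset.mem_filter.1 he'
        have h2 : (subSpan s).connectedComponentMk (Quot.out e).2 = K := by
          rw [← SimpleGraph.ConnectedComponent.connectedComponentMk_eq_of_adj (hadj e he)]
          exact hKe
        conv_lhs => rw [hout e he]
        rw [ev_mk, hKe, h2]
      rw [Finset.prod_congr rfl hconst, Finset.prod_const]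
      congr 1
      rw [compEdges]
      have hiff : ∀ e ∈ s,
          ((subSpan s).connectedComponentMk (Quot.out e).1 = K
            ↔ ∀ v ∈ e, (subSpan s).connectedComponentMk v = K) := by
        intro e he
        constructor
        · intro h v hv
          rw [hout e he] at hv
          rcases Sym2.mem_iff.1 hv with rfl | rfl
          · exact h
          · rw [← SimpleGraph.ConnectedComponent.connectedComponentMk_eq_of_adj (hadj e he)]
            exact h
        · intro h
          apply h
          have hm : (Quot.out e).1 ∈ s((Quot.out e).1, (Quot.out e).2) :=
            Sym2.mem_mk_left _ _
          rwa [← hout e he] at hm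
      refine (congrArg Finset.card (Finset.filter_congr hiff)).trans ?_
      all_goals exact congrArg Finset.card (filter_ext _ _)
  rw [Finset.sum_congr rfl fun τ _ => comp3 τ]
  -- factor the sum over component spins as a product
  rw [finprod_eq_prod_of_fintype]
  have hswap := Finset.prod_univ_sum
    (fun _ : (subSpan s).ConnectedComponent => (Finset.univ : Finset Bool))
    (fun K b => wt γ b ^ compVerts s K * (1 + lam γ b * lam γ b) ^ compEdges s K)
  rw [Fintype.piFinset_univ] at hswap
  rw [← hswap]
  refine Finset.prod_congr rfl fun K _ => ?_
  rw [Fintype.sum_bool]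
  rw [comp_sum γ (compVerts s K) (compEdges s K) (compVerts_pos s K) (compVerts_le s K)]
  rfl



lemma sum_binom {ι : Type*} [DecidableEq ι] (A : Finset ι) (β : ℝ) :
    ∑ U ∈ A.powerset, β ^ U.card * (1 - β) ^ (A.card - U.card) = 1 := by
  have h := Finset.prod_add (fun _ : ι => β) (fun _ : ι => (1 : ℝ) - β) A
  simp only [Finset.prod_const] at h
  have h1 : β + (1 - β) = 1 := by ring
  rw [h1, one_pow] at h
  refine Eq.trans (Finset.sum_congr rfl fun U hU => ?_) h.symm
  rw [Finset.card_sdiff_of_subset (Finset.mem_powerset.1 hU)]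

lemma sum_supersets {ι : Type*} [DecidableEq ι] (E T : Finset ι) (hT : T ⊆ E) (β : ℝ) :
    ∑ S ∈ E.powerset.filter (fun S => T ⊆ S), β ^ S.card * (1 - β) ^ (E.card - S.card)
      = β ^ T.card := by
  have step : ∑ S ∈ E.powerset.filter (fun S => T ⊆ S),
      β ^ S.card * (1 - β) ^ (E.card - S.card)
      = ∑ U ∈ (E \ T).powerset,
          β ^ T.card * (β ^ U.card * (1 - β) ^ ((E \ T).card - U.card)) := by
    apply Finset.sum_nbij' (i := fun S => S \ T) (j := fun U => U ∪ T)
    · intro S hS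
      rw [Finset.mem_filter, Finset.mem_powerset] at hS
      exact Finset.mem_powerset.2 (Finset.sdiff_subset_sdiff hS.1 (le_refl T))
    · intro U hU
      rw [Finset.mem_powerset] at hU
      refine Finset.mem_filter.2 ⟨Finset.mem_powerset.2 ?_, Finset.subset_union_right⟩
      exact Finset.union_subset (hU.trans Finset.sdiff_subset) hT
    · intro S hS
      rw [Finset.mem_filter] at hS
      exact Finset.sdiff_union_of_subset hS.2
    · intro U hU
      rw [Finset.mem_powerset] at hU
      exact Finset.union_sdiff_cancel_right
        (Finset.disjoint_of_subset_left hU Finset.sdiff_disjoint)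
    · intro S hS
      rw [Finset.mem_filter, Finset.mem_powerset] at hS
      have hc1 : (S \ T).card + T.card = S.card :=
        Finset.card_sdiff_add_card_eq_card hS.2
      have hc2 : (E \ T).card = E.card - T.card := Finset.card_sdiff_of_subset hT
      have hc3 : S.card ≤ E.card := Finset.card_le_card hS.1
      have hc4 : (S \ T).card ≤ (E \ T).card :=
        Finset.card_le_card (Finset.sdiff_subset_sdiff hS.1 (le_refl T))
      have hc5 : T.card ≤ E.card := Finset.card_le_card hT
      have he1 : T.card + (S \ T).card = S.card := by omega
      have he2 : E.card - S.card = (E \ T).card - (S \ T).card := by omega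
      rw [he2, ← he1, pow_add]
      ring
  rw [step, ← Finset.mul_sum, sum_binom, mul_one]

end ThetaAux

theorem theta_component_expansion {V : Type*} [Fintype V] [DecidableEq V]
    (G : SimpleGraph V) [DecidableRel G.Adj] (β γ : ℝ) :
    ∑ s ∈ G.edgeFinset.powerset,
        β ^ s.card * ∏ i : V, Polynomial.aeval γ (isingF (degIn s i))
      = ∑ s ∈ G.edgeFinset.powerset,
          β ^ s.card * (1 - β) ^ (G.edgeFinset.card - s.card) *
            ∏ᶠ K : (subSpan s).ConnectedComponent,
              ∑ k ∈ Finset.range (compNullity s K + 1),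
                ((compNullity s K).choose k : ℝ) * Polynomial.aeval γ (isingF (2 * k)) := by
  have hkey : ∀ s' ∈ G.edgeFinset.powerset,
      β ^ s'.card * (1 - β) ^ (G.edgeFinset.card - s'.card) *
        (∏ᶠ K : (subSpan s').ConnectedComponent,
          ∑ k ∈ Finset.range (compNullity s' K + 1),
            ((compNullity s' K).choose k : ℝ) * Polynomial.aeval γ (isingF (2 * k)))
      = ∑ t ∈ s'.powerset, β ^ s'.card * (1 - β) ^ (G.edgeFinset.card - s'.card) *
          ∏ i : V, (Polynomial.aeval γ (isingF (degIn t i)) : ℝ) := by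
    intro s' hs'
    have hnd : ∀ e ∈ s', ¬ e.IsDiag := fun e he =>
      SimpleGraph.not_isDiag_of_mem_edgeSet G
        (SimpleGraph.mem_edgeFinset.1 ((Finset.mem_powerset.1 hs') he))
    rw [← ThetaAux.key s' hnd γ, Finset.mul_sum]
  rw [Finset.sum_congr rfl hkey]
  rw [Finset.sum_comm' (t' := G.edgeFinset.powerset)
    (s' := fun T => G.edgeFinset.powerset.filter (fun S => T ⊆ S))
    (by
      intro S T
      simp only [Finset.mem_powerset, Finset.mem_filter]
      constructor
      · rintro ⟨h1, h2⟩
        exact ⟨⟨h1, h2⟩, h2.trans h1⟩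
      · rintro ⟨⟨h1, h2⟩, -⟩
        exact ⟨h1, h2⟩)]
  refine Finset.sum_congr rfl fun T hT => ?_
  have hT' : T ⊆ G.edgeFinset := Finset.mem_powerset.1 hT
  calc β ^ T.card * ∏ i : V, (Polynomial.aeval γ (isingF (degIn T i)) : ℝ)
      = (∑ S ∈ G.edgeFinset.powerset.filter (fun S => T ⊆ S),
          β ^ S.card * (1 - β) ^ (G.edgeFinset.card - S.card))
          * ∏ i : V, (Polynomial.aeval γ (isingF (degIn T i)) : ℝ) := by
        rw [ThetaAux.sum_supersets G.edgeFinset T hT' β]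
    _ = ∑ S ∈ G.edgeFinset.powerset.filter (fun S => T ⊆ S),
          β ^ S.card * (1 - β) ^ (G.edgeFinset.card - S.card) *
            ∏ i : V, (Polynomial.aeval γ (isingF (degIn T i)) : ℝ) := by
        rw [Finset.sum_mul]
end

section
/- Let G = (V,E) be a finite simple graph and let d_i denote the degree of vertex i in G. Then in ℤ[β]: (1-β)^{|V|} · Σ_{s ⊆ E} (-β)^{|s|} · Π_{i ∈ V} (1 - deg_s(i)) = (1-β)^{|E|} · Σ_{M} (-β)^{|M|} · Π_{i ∈ V, i not covered by M} (1 + (d_i - 1)·β), where the second sum runs over all matchings M of G. -/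
open Polynomial

attribute [local instance] Classical.propDecidable

/-- A set of edges is a matching if no two distinct edges of it share a vertex. -/
def IsMatchingSet {W : Type*} (M : Finset (Sym2 W)) : Prop :=
  ∀ e ∈ M, ∀ e' ∈ M, e ≠ e' → ∀ v : W, ¬(v ∈ e ∧ v ∈ e')

set_option linter.unusedSectionVars false

open Finset

namespace OmegaMD
variable {V : Type*} [Fintype V] [DecidableEq V]
noncomputable def ends (e : Sym2 V) : Finset V := univ.filter (fun v => v ∈ e)
lemma mem_ends {e : Sym2 V} {v : V} : v ∈ ends e ↔ v ∈ e := by simp [ends]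
lemma ends_eq (a b : V) : ends (s(a, b) : Sym2 V) = {a, b} := by
  ext v; simp [mem_ends, Finset.mem_insert]
lemma card_ends {e : Sym2 V} (he : ¬e.IsDiag) : (ends e).card = 2 := by
  induction e using Sym2.ind with
  | _ a b =>
    rw [ends_eq]
    have hab : a ≠ b := fun h => he (by simp [h])
    rw [Finset.card_insert_of_notMem (by simpa using hab), Finset.card_singleton]
noncomputable def choiceSet (s : Finset (Sym2 V)) (v : V) : Finset (Option (Sym2 V)) :=
  insert none ((s.filter (fun e => v ∈ e)).image some)
noncomputable def Phi (s : Finset (Sym2 V)) : Finset (V → Option (Sym2 V)) :=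
  Fintype.piFinset (choiceSet s)
lemma mem_choiceSet {s : Finset (Sym2 V)} {v : V} {o : Option (Sym2 V)} :
    o ∈ choiceSet s v ↔ o = none ∨ ∃ e, e ∈ s ∧ v ∈ e ∧ o = some e := by
  simp [choiceSet]
  constructor
  · rintro (h | ⟨e, ⟨h1, h2⟩, rfl⟩)
    · exact Or.inl h
    · exact Or.inr ⟨e, h1, h2, rfl⟩
  · rintro (h | ⟨e, h1, h2, rfl⟩)
    · exact Or.inl h
    · exact Or.inr ⟨e, ⟨h1, h2⟩, rfl⟩
lemma mem_Phi {s : Finset (Sym2 V)} {φ : V → Option (Sym2 V)} :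
    φ ∈ Phi s ↔ ∀ v e, φ v = some e → e ∈ s ∧ v ∈ e := by
  simp only [Phi, Fintype.mem_piFinset, mem_choiceSet]
  constructor
  · intro h v e hve
    rcases h v with h' | ⟨e', h1, h2, h3⟩
    · rw [hve] at h'; cases h'
    · rw [hve] at h3; cases Option.some_injective _ h3; exact ⟨h1, h2⟩
  · intro h v
    cases hv : φ v with
    | none => exact Or.inl rfl
    | some e => exact Or.inr ⟨e, (h v e hv).1, (h v e hv).2, rfl⟩
noncomputable def fiber (φ : V → Option (Sym2 V)) (e : Sym2 V) : Finset V :=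
  univ.filter (fun v => φ v = some e)
noncomputable def domF (φ : V → Option (Sym2 V)) : Finset V :=
  univ.filter (fun v => φ v ≠ none)
noncomputable def noneF (φ : V → Option (Sym2 V)) : Finset V :=
  univ.filter (fun v => φ v = none)
noncomputable def usedF (s : Finset (Sym2 V)) (φ : V → Option (Sym2 V)) : Finset (Sym2 V) :=
  s.filter (fun e => ∃ v, φ v = some e)
noncomputable def S1 (s : Finset (Sym2 V)) (φ : V → Option (Sym2 V)) : Finset (Sym2 V) :=
  s.filter (fun e => (fiber φ e).card = 1)
noncomputable def D2 (s : Finset (Sym2 V)) (φ : V → Option (Sym2 V)) : Finset (Sym2 V) :=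
  s.filter (fun e => (fiber φ e).card = 2)

-- §2 counting lemmas
variable {E : Finset (Sym2 V)} {φ : V → Option (Sym2 V)}

lemma fiber_subset_ends (hφ : φ ∈ Phi E) (e : Sym2 V) : fiber φ e ⊆ ends e := by
  intro v hv
  rw [fiber, Finset.mem_filter] at hv
  exact mem_ends.2 ((mem_Phi.1 hφ v e hv.2).2)

lemma fiber_disjoint {e e' : Sym2 V} (h : e ≠ e') : Disjoint (fiber φ e) (fiber φ e') := by
  rw [Finset.disjoint_left]
  intro v hv hv'
  rw [fiber, Finset.mem_filter] at hv hv'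
  exact h (Option.some_injective _ (hv.2.symm.trans hv'.2))

lemma card_fiber_le (hE : ∀ e ∈ E, ¬e.IsDiag) (hφ : φ ∈ Phi E) {e : Sym2 V} (he : e ∈ E) :
    (fiber φ e).card ≤ 2 := by
  calc (fiber φ e).card ≤ (ends e).card := Finset.card_le_card (fiber_subset_ends hφ e)
  _ = 2 := card_ends (hE e he)

lemma usedF_eq_union (hE : ∀ e ∈ E, ¬e.IsDiag) (hφ : φ ∈ Phi E) :
    usedF E φ = S1 E φ ∪ D2 E φ := by
  ext e
  simp only [usedF, S1, D2, Finset.mem_union, Finset.mem_filter]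
  constructor
  · rintro ⟨he, v, hv⟩
    have h1 : 1 ≤ (fiber φ e).card := Finset.card_pos.2 ⟨v, by simp [fiber, hv]⟩
    have h2 := card_fiber_le hE hφ he
    have : (fiber φ e).card = 1 ∨ (fiber φ e).card = 2 := by omega
    rcases this with h | h
    · exact Or.inl ⟨he, h⟩
    · exact Or.inr ⟨he, h⟩
  · rintro (⟨he, h⟩ | ⟨he, h⟩) <;>
    · obtain ⟨v, hv⟩ := Finset.card_pos.1 (by omega : 0 < (fiber φ e).card)
      rw [fiber, Finset.mem_filter] at hv
      exact ⟨he, v, hv.2⟩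

lemma S1_disjoint_D2 : Disjoint (S1 E φ) (D2 E φ) := by
  rw [Finset.disjoint_left]
  intro e he he'
  rw [S1, Finset.mem_filter] at he
  rw [D2, Finset.mem_filter] at he'
  omega

lemma domF_eq_biUnion (hφ : φ ∈ Phi E) :
    domF φ = (usedF E φ).biUnion (fiber φ) := by
  ext v
  simp only [domF, usedF, fiber, Finset.mem_biUnion, Finset.mem_filter, Finset.mem_univ,
    true_and]
  constructor
  · intro hv
    cases h : φ v with
    | none => exact absurd h hv
    | some e => exact ⟨e, ⟨(mem_Phi.1 hφ v e h).1, v, h⟩, rfl⟩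
  · rintro ⟨e, _, hv⟩
    simp [hv]

lemma card_domF (hE : ∀ e ∈ E, ¬e.IsDiag) (hφ : φ ∈ Phi E) :
    (domF φ).card = (S1 E φ).card + 2 * (D2 E φ).card := by
  rw [domF_eq_biUnion hφ, Finset.card_biUnion (fun e _ e' _ h => fiber_disjoint h),
    usedF_eq_union hE hφ, Finset.sum_union S1_disjoint_D2]
  have hA : ∑ e ∈ S1 E φ, (fiber φ e).card = ∑ _e ∈ S1 E φ, 1 :=
    Finset.sum_congr rfl (fun e he => (Finset.mem_filter.1 he).2)
  have hB : ∑ e ∈ D2 E φ, (fiber φ e).card = ∑ _e ∈ D2 E φ, 2 :=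
    Finset.sum_congr rfl (fun e he => (Finset.mem_filter.1 he).2)
  rw [hA, hB, Finset.sum_const, Finset.sum_const]
  simp [mul_comm]

lemma card_noneF_add_domF : (noneF φ).card + (domF φ).card = Fintype.card V := by
  rw [noneF, domF, Finset.card_filter_add_card_filter_not]
  exact Finset.card_univ

lemma card_usedF (hE : ∀ e ∈ E, ¬e.IsDiag) (hφ : φ ∈ Phi E) :
    (usedF E φ).card = (S1 E φ).card + (D2 E φ).card := by
  rw [usedF_eq_union hE hφ, Finset.card_union_of_disjoint S1_disjoint_D2]

lemma usedF_subset : usedF E φ ⊆ E := Finset.filter_subset _ _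

-- §3 algebraic lemmas
variable {R : Type*} [CommRing R]

lemma sum_pow_powerset {α : Type*} (B : Finset α) (x : R) :
    ∑ t ∈ B.powerset, x ^ t.card = (x + 1) ^ B.card := by
  calc ∑ t ∈ B.powerset, x ^ t.card
      = ∑ t ∈ B.powerset, (∏ _i ∈ t, x) * ∏ _i ∈ B \ t, 1 := by
        simp [Finset.prod_const]
    _ = ∏ _i ∈ B, (x + 1) := (Finset.prod_add _ _ _).symm
    _ = (x + 1) ^ B.card := by rw [Finset.prod_const]

lemma sum_pow_supersets {α : Type*} {A u : Finset α} [DecidablePred fun s : Finset α => u ⊆ s]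
    (hu : u ⊆ A) (x : R) :
    ∑ s ∈ A.powerset.filter (fun s => u ⊆ s), x ^ s.card
      = x ^ u.card * (x + 1) ^ (A \ u).card := by
  have := Finset.sum_nbij' (i := fun s => s \ u) (j := fun t => t ∪ u)
    (s := A.powerset.filter (fun s => u ⊆ s)) (t := (A \ u).powerset)
    (f := fun s => x ^ s.card) (g := fun t => x ^ u.card * x ^ t.card)
    (by
      intro s hs
      rw [Finset.mem_filter, Finset.mem_powerset] at hs
      rw [Finset.mem_powerset]
      exact Finset.sdiff_subset_sdiff hs.1 (le_refl u))
    (by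
      intro t ht
      rw [Finset.mem_powerset] at ht
      rw [Finset.mem_filter, Finset.mem_powerset]
      exact ⟨Finset.union_subset (ht.trans (Finset.sdiff_subset)) hu, Finset.subset_union_right⟩)
    (by
      intro s hs
      rw [Finset.mem_filter] at hs
      exact Finset.sdiff_union_of_subset hs.2)
    (by
      intro t ht
      rw [Finset.mem_powerset] at ht
      apply Finset.union_sdiff_cancel_right
      exact (Finset.sdiff_disjoint).mono_left ht)
    (by
      intro s hs
      rw [Finset.mem_filter] at hs
      show x ^ s.card = x ^ u.card * x ^ (s \ u).card
      rw [← pow_add]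
      congr 1
      rw [Finset.card_sdiff_of_subset hs.2]
      have := Finset.card_le_card hs.2
      omega)
  rw [this, ← Finset.mul_sum, sum_pow_powerset]

lemma expand_prod_one_sub_deg (s : Finset (Sym2 V)) :
    (∏ v : V, (1 - (degIn s v : R)))
      = ∑ φ ∈ Phi s, ∏ v, (if φ v = none then (1 : R) else -1) := by
  have hv : ∀ v, (1 - (degIn s v : R))
      = ∑ o ∈ choiceSet s v, (if o = none then (1 : R) else -1) := by
    intro v
    rw [choiceSet, Finset.sum_insert (by simp),
      Finset.sum_image (fun a _ b _ h => Option.some_injective _ h)]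
    simp [degIn, sub_eq_add_neg]
    congr!
  calc ∏ v : V, (1 - (degIn s v : R))
      = ∏ v : V, ∑ o ∈ choiceSet s v, (if o = none then (1 : R) else -1) :=
        Finset.prod_congr rfl (fun v _ => hv v)
    _ = ∑ φ ∈ Phi s, ∏ v, (if φ v = none then (1 : R) else -1) :=
        Finset.prod_univ_sum _ _

lemma sign_prod_eq (φ : V → Option (Sym2 V)) :
    (∏ v : V, (if φ v = none then (1 : R) else -1)) = (-1) ^ (domF φ).card := by
  rw [← Finset.prod_filter_mul_prod_filter_not univ (fun v => φ v = none)]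
  rw [Finset.prod_eq_one (fun v hv => by simp [(Finset.mem_filter.1 hv).2])]
  rw [one_mul, domF]
  rw [Finset.prod_congr rfl (fun v hv => by simp [(Finset.mem_filter.1 hv).2] : ∀ v ∈ univ.filter (fun v => ¬φ v = none), (if φ v = none then (1:R) else -1) = -1)]
  rw [Finset.prod_const]

lemma Phi_eq_filter {s E : Finset (Sym2 V)} (hs : s ⊆ E) :
    Phi s = (Phi E).filter (fun φ => usedF E φ ⊆ s) := by
  ext φ
  rw [Finset.mem_filter, mem_Phi, mem_Phi]
  constructor
  · intro h
    refine ⟨fun v e hve => ⟨hs (h v e hve).1, (h v e hve).2⟩, ?_⟩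
    intro e he
    rw [usedF, Finset.mem_filter] at he
    obtain ⟨_, v, hv⟩ := he
    exact (h v e hv).1
  · rintro ⟨h, hsub⟩
    intro v e hve
    refine ⟨hsub ?_, (h v e hve).2⟩
    rw [usedF, Finset.mem_filter]
    exact ⟨(h v e hve).1, v, hve⟩

lemma swap_sum {E : Finset (Sym2 V)} (x : R) (f : (V → Option (Sym2 V)) → R) :
    ∑ s ∈ E.powerset, x ^ s.card * ∑ φ ∈ Phi s, f φ
      = ∑ φ ∈ Phi E, f φ * (x ^ (usedF E φ).card * (x + 1) ^ (E \ usedF E φ).card) := by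
  have step1 : ∀ s ∈ E.powerset, x ^ s.card * ∑ φ ∈ Phi s, f φ
      = ∑ φ ∈ Phi E, (if usedF E φ ⊆ s then x ^ s.card * f φ else 0) := by
    intro s hs
    rw [Phi_eq_filter (Finset.mem_powerset.1 hs), Finset.sum_filter, Finset.mul_sum]
    exact Finset.sum_congr rfl (fun φ _ => by split <;> simp
    )
  rw [Finset.sum_congr rfl step1, Finset.sum_comm]
  refine Finset.sum_congr rfl (fun φ hφ => ?_)
  rw [← Finset.sum_filter]
  have : ∑ s ∈ E.powerset.filter (fun s => usedF E φ ⊆ s), x ^ s.card * f φ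
      = (∑ s ∈ E.powerset.filter (fun s => usedF E φ ⊆ s), x ^ s.card) * f φ := by
    rw [Finset.sum_mul]
  rw [this, sum_pow_supersets (usedF_subset) x, mul_comm]
  congr!

-- §4 LHS per-φ rearrangement
lemma sign_pow_key (x : R) (a d : ℕ) :
    ((-1 : R))^(a+2*d) * (-x)^(a+d) = x^a * (-x)^d := by
  rw [neg_pow x (a+d), ← mul_assoc, ← pow_add]
  have h : (a + 2*d) + (a+d) = 2*(a+d) + d := by ring
  rw [h, pow_add, pow_mul, neg_one_sq, one_pow, one_mul, pow_add, neg_pow x d]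
  ring

lemma pow_rearrange (x : R) (n a d m : ℕ) :
    (1-x)^(n + (a+2*d)) * ((-1)^(a+2*d) * ((-x)^(a+d) * (1-x)^m))
      = (1-x)^(m + (a+d)) * ((1-x)^n * (x^a * ((-x)*(1-x))^d)) := by
  calc (1-x)^(n + (a+2*d)) * ((-1)^(a+2*d) * ((-x)^(a+d) * (1-x)^m))
      = ((-1)^(a+2*d) * (-x)^(a+d)) * ((1-x)^(n + (a+2*d)) * (1-x)^m) := by ring
    _ = (x^a * (-x)^d) * ((1-x)^(n + (a+2*d)) * (1-x)^m) := by rw [sign_pow_key]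
    _ = (1-x)^(m + (a+d)) * ((1-x)^n * (x^a * ((-x)*(1-x))^d)) := by
        rw [mul_pow]; ring

lemma binom_D2 (x : R) (D : Finset (Sym2 V)) :
    ((-x) * (1-x)) ^ D.card = ∑ M ∈ D.powerset, (-x)^M.card * x^(2*((D \ M).card)) := by
  calc ((-x) * (1-x)) ^ D.card = ∏ _e ∈ D, ((-x) + x^2) := by
        rw [Finset.prod_const]; congr 1; ring
    _ = ∑ M ∈ D.powerset, (∏ _e ∈ M, (-x)) * ∏ _e ∈ D \ M, x^2 := Finset.prod_add _ _ _
    _ = ∑ M ∈ D.powerset, (-x)^M.card * x^(2*((D \ M).card)) := by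
        refine Finset.sum_congr rfl (fun M hM => ?_)
        rw [Finset.prod_const, Finset.prod_const, pow_mul]

/-- the common weight -/
noncomputable def Fw (x : R) (E M : Finset (Sym2 V)) (φ : V → Option (Sym2 V)) : R :=
  (-x)^M.card * ((1-x)^(noneF φ).card * x^((S1 E φ).card + 2*((D2 E φ) \ M).card))

lemma lhs_phi_eq {E : Finset (Sym2 V)} {φ : V → Option (Sym2 V)} (x : R)
    (hE : ∀ e ∈ E, ¬e.IsDiag) (hφ : φ ∈ Phi E) :
    (1-x) ^ Fintype.card V *
        ((-1)^(domF φ).card * ((-x)^(usedF E φ).card * (1-x)^((E \ usedF E φ).card)))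
      = (1-x) ^ E.card *
          ∑ M ∈ (D2 E φ).powerset, Fw x E M φ := by
  simp only [Fw]
  have hd := card_domF hE hφ
  have hu := card_usedF hE hφ
  have hn := card_noneF_add_domF (φ := φ)
  have hm := Finset.card_sdiff_add_card_eq_card (usedF_subset (E := E) (φ := φ))
  rw [← hn, hd, ← hm, hu]
  rw [pow_rearrange x (noneF φ).card (S1 E φ).card (D2 E φ).card ((E \ usedF E φ)).card]
  rw [binom_D2, Finset.mul_sum, Finset.mul_sum]
  refine congrArg _ (Finset.sum_congr rfl (fun M hM => ?_))
  rw [pow_add]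
  ring

-- §5 matchings
lemma fiber_eq_ends {E : Finset (Sym2 V)} {φ : V → Option (Sym2 V)}
    (hE : ∀ e ∈ E, ¬e.IsDiag) (hφ : φ ∈ Phi E) {e : Sym2 V} (he : e ∈ E)
    (h2 : (fiber φ e).card = 2) : fiber φ e = ends e :=
  Finset.eq_of_subset_of_card_le (fiber_subset_ends hφ e)
    (by rw [card_ends (hE e he), h2])

lemma phi_of_D2 {E : Finset (Sym2 V)} {φ : V → Option (Sym2 V)}
    (hE : ∀ e ∈ E, ¬e.IsDiag) (hφ : φ ∈ Phi E) {e : Sym2 V} (he : e ∈ D2 E φ)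
    {v : V} (hv : v ∈ e) : φ v = some e := by
  rw [D2, Finset.mem_filter] at he
  have := fiber_eq_ends hE hφ he.1 he.2
  have hv' : v ∈ fiber φ e := by rw [this, mem_ends]; exact hv
  rw [fiber, Finset.mem_filter] at hv'
  exact hv'.2

lemma matching_of_D2 {E : Finset (Sym2 V)} {φ : V → Option (Sym2 V)} {M : Finset (Sym2 V)}
    (hE : ∀ e ∈ E, ¬e.IsDiag) (hφ : φ ∈ Phi E) (hMD : M ⊆ D2 E φ) : IsMatchingSet M := by
  intro e he e' he' hne v ⟨hv, hv'⟩
  have h1 := phi_of_D2 hE hφ (hMD he) hv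
  have h2 := phi_of_D2 hE hφ (hMD he') hv'
  exact hne (Option.some_injective _ (h1.symm.trans h2))

lemma unique_cover {M : Finset (Sym2 V)} (hM : IsMatchingSet M) {v : V} {e : Sym2 V}
    (he : e ∈ M) (hv : v ∈ e) : M.filter (fun e' => v ∈ e') = {e} := by
  ext e'
  simp only [Finset.mem_filter, Finset.mem_singleton]
  constructor
  · rintro ⟨he', hv'⟩
    by_contra hne
    exact hM e' he' e he hne v ⟨hv', hv⟩
  · rintro rfl; exact ⟨he, hv⟩

noncomputable def coveredF (M : Finset (Sym2 V)) : Finset V :=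
  univ.filter (fun v => ∃ e ∈ M, v ∈ e)

lemma card_coveredF {E M : Finset (Sym2 V)} (hE : ∀ e ∈ E, ¬e.IsDiag) (hME : M ⊆ E)
    (hM : IsMatchingSet M) : (coveredF M).card = 2 * M.card := by
  have : coveredF M = M.biUnion ends := by
    ext v
    simp only [coveredF, Finset.mem_filter, Finset.mem_univ, true_and, Finset.mem_biUnion,
      mem_ends]
  rw [this, Finset.card_biUnion]
  · rw [Finset.sum_congr rfl (fun e he => card_ends (hE e (hME he))), Finset.sum_const,
      smul_eq_mul, mul_comm]
  · intro e he e' he' hne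
    rw [Function.onFun, Finset.disjoint_left]
    intro v hv hv'
    exact hM e he e' he' hne v ⟨mem_ends.1 hv, mem_ends.1 hv'⟩

/-- per-vertex choice sets given a matching -/
noncomputable def tM (E M : Finset (Sym2 V)) (v : V) : Finset (Option (Sym2 V)) :=
  if ∃ e ∈ M, v ∈ e then (M.filter (fun e => v ∈ e)).image some else choiceSet E v

noncomputable def PhiM (E M : Finset (Sym2 V)) : Finset (V → Option (Sym2 V)) :=
  Fintype.piFinset (tM E M)

lemma mem_PhiM {E M : Finset (Sym2 V)} {φ : V → Option (Sym2 V)}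
    (hE : ∀ e ∈ E, ¬e.IsDiag) (hME : M ⊆ E) (hM : IsMatchingSet M) :
    φ ∈ PhiM E M ↔ (φ ∈ Phi E ∧ M ⊆ D2 E φ) := by
  constructor
  · intro hφ
    have hφ' := Fintype.mem_piFinset.1 hφ
    have hPhi : φ ∈ Phi E := by
      rw [mem_Phi]
      intro v e hve
      have := hφ' v
      rw [tM] at this
      split at this
      · rw [Finset.mem_image] at this
        obtain ⟨e', he', heq⟩ := this
        rw [hve] at heq
        cases Option.some_injective _ heq
        rw [Finset.mem_filter] at he'
        exact ⟨hME he'.1, he'.2⟩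
      · rw [mem_choiceSet] at this
        rcases this with h | ⟨e', h1, h2, h3⟩
        · rw [hve] at h; cases h
        · rw [hve] at h3; cases Option.some_injective _ h3; exact ⟨h1, h2⟩
    refine ⟨hPhi, fun e he => ?_⟩
    have hfib : fiber φ e = ends e := by
      apply Finset.Subset.antisymm (fiber_subset_ends hPhi e)
      intro v hv
      rw [mem_ends] at hv
      have hcov : ∃ e' ∈ M, v ∈ e' := ⟨e, he, hv⟩
      have := hφ' v
      rw [tM, if_pos hcov, Finset.mem_image] at this
      obtain ⟨e', he', heq⟩ := this
      rw [Finset.mem_filter] at he'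
      have : e' = e := by
        by_contra hne
        exact hM e' he'.1 e he hne v ⟨he'.2, hv⟩
      rw [fiber, Finset.mem_filter]
      exact ⟨Finset.mem_univ v, by rw [← heq, this]⟩
    rw [D2, Finset.mem_filter]
    exact ⟨hME he, by rw [hfib, card_ends (hE e (hME he))]⟩
  · rintro ⟨hPhi, hMD⟩
    rw [PhiM, Fintype.mem_piFinset]
    intro v
    rw [tM]
    split
    · next hcov =>
      obtain ⟨e, he, hv⟩ := hcov
      have := phi_of_D2 hE hPhi (hMD he) hv
      rw [Finset.mem_image]
      exact ⟨e, Finset.mem_filter.2 ⟨he, hv⟩, this.symm⟩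
    · exact Fintype.mem_piFinset.1 hPhi v

-- §6 reindexing
lemma reindex (x : R) {E : Finset (Sym2 V)} (hE : ∀ e ∈ E, ¬e.IsDiag) :
    ∑ φ ∈ Phi E, ∑ M ∈ (D2 E φ).powerset, Fw x E M φ
      = ∑ M ∈ E.powerset.filter (fun M => IsMatchingSet M), ∑ φ ∈ PhiM E M, Fw x E M φ := by
  have lhs_eq : ∀ φ ∈ Phi E, ∑ M ∈ (D2 E φ).powerset, Fw x E M φ
      = ∑ M ∈ E.powerset, (if M ⊆ D2 E φ then Fw x E M φ else 0) := by
    intro φ hφ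
    rw [← Finset.sum_filter]
    congr 1
    ext M
    rw [Finset.mem_filter, Finset.mem_powerset, Finset.mem_powerset]
    constructor
    · intro h; exact ⟨h.trans (Finset.filter_subset _ _), h⟩
    · exact fun h => h.2
  rw [Finset.sum_congr rfl lhs_eq, Finset.sum_comm, Finset.sum_filter]
  refine Finset.sum_congr rfl (fun M hM => ?_)
  by_cases hmatch : IsMatchingSet M
  · rw [if_pos hmatch]
    have : (Phi E).filter (fun φ => M ⊆ D2 E φ) = PhiM E M := by
      ext φ
      rw [Finset.mem_filter, mem_PhiM hE (Finset.mem_powerset.1 hM) hmatch]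
    rw [← this, Finset.sum_filter]
  · rw [if_neg hmatch]
    refine Finset.sum_eq_zero (fun φ hφ => ?_)
    rw [if_neg (fun h => hmatch (matching_of_D2 hE hφ h))]

-- §7 RHS weights
noncomputable def wt (x : R) (M : Finset (Sym2 V)) (v : V) (o : Option (Sym2 V)) : R :=
  if o = none then (1-x) else if ∃ e ∈ M, v ∈ e then 1 else x

lemma sum_wt (x : R) {E M : Finset (Sym2 V)} (hM : IsMatchingSet M) (v : V) :
    ∑ o ∈ tM E M v, wt x M v o
      = if ∃ e ∈ M, v ∈ e then 1
        else ((1-x) + ((E.filter (fun e => v ∈ e)).card : R) * x) := by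
  by_cases h : ∃ e ∈ M, v ∈ e
  · rw [if_pos h, tM, if_pos h]
    obtain ⟨e, he, hv⟩ := h
    have h' : ∃ e' ∈ M, v ∈ e' := ⟨e, he, hv⟩
    rw [unique_cover hM he hv]
    simp [wt, h']
  · rw [if_neg h, tM, if_neg h, choiceSet, Finset.sum_insert (by simp),
      Finset.sum_image (fun a _ b _ hab => Option.some_injective _ hab)]
    simp [wt, h, Finset.sum_const, mul_comm]

lemma rhs_expand (x : R) {E M : Finset (Sym2 V)} (hM : IsMatchingSet M) :
    ∏ v ∈ univ.filter (fun v => ¬∃ e ∈ M, v ∈ e),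
        ((1-x) + ((E.filter (fun e => v ∈ e)).card : R) * x)
      = ∑ φ ∈ PhiM E M, ∏ v, wt x M v (φ v) := by
  have h1 : ∏ v : V, (if ∃ e ∈ M, v ∈ e then (1:R)
        else ((1-x) + ((E.filter (fun e => v ∈ e)).card : R) * x))
      = ∏ v ∈ univ.filter (fun v => ¬∃ e ∈ M, v ∈ e),
          ((1-x) + ((E.filter (fun e => v ∈ e)).card : R) * x) := by
    rw [← Finset.prod_filter_mul_prod_filter_not univ (fun v => ∃ e ∈ M, v ∈ e),
      Finset.prod_eq_one (fun v hv => if_pos (Finset.mem_filter.1 hv).2), one_mul]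
    exact Finset.prod_congr rfl (fun v hv => if_neg (Finset.mem_filter.1 hv).2)
  calc ∏ v ∈ univ.filter (fun v => ¬∃ e ∈ M, v ∈ e),
        ((1-x) + ((E.filter (fun e => v ∈ e)).card : R) * x)
      = ∏ v : V, (if ∃ e ∈ M, v ∈ e then (1:R)
          else ((1-x) + ((E.filter (fun e => v ∈ e)).card : R) * x)) := h1.symm
    _ = ∏ v : V, ∑ o ∈ tM E M v, wt x M v o :=
        Finset.prod_congr rfl (fun v _ => (sum_wt x hM v).symm)
    _ = ∑ φ ∈ PhiM E M, ∏ v, wt x M v (φ v) := Finset.prod_univ_sum _ _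

lemma wt_prod (x : R) {E M : Finset (Sym2 V)} {φ : V → Option (Sym2 V)}
    (hE : ∀ e ∈ E, ¬e.IsDiag) (hME : M ⊆ E) (hM : IsMatchingSet M)
    (hφ : φ ∈ PhiM E M) :
    ∏ v, wt x M v (φ v)
      = (1-x)^(noneF φ).card * x^((S1 E φ).card + 2*((D2 E φ) \ M).card) := by
  obtain ⟨hPhi, hMD⟩ := (mem_PhiM hE hME hM).1 hφ
  have hcovdom : ∀ v, (∃ e ∈ M, v ∈ e) → φ v ≠ none := by
    rintro v ⟨e, he, hv⟩
    rw [phi_of_D2 hE hPhi (hMD he) hv]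
    simp
  have e1 : univ.filter (fun v => φ v = none) = noneF φ := by
    ext v; simp [noneF]
  have e2 : (domF φ).filter (fun v => ∃ e ∈ M, v ∈ e) = coveredF M := by
    ext v
    simp only [domF, coveredF, Finset.mem_filter, Finset.mem_univ, true_and]
    exact ⟨fun h => h.2, fun h => ⟨hcovdom v h, h⟩⟩
  have e3 : univ.filter (fun v => ¬ φ v = none) = domF φ := by
    ext v; simp [domF]
  calc ∏ v : V, wt x M v (φ v)
      = (∏ v ∈ univ.filter (fun v => φ v = none), wt x M v (φ v)) *
          ∏ v ∈ univ.filter (fun v => ¬ φ v = none), wt x M v (φ v) :=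
        (Finset.prod_filter_mul_prod_filter_not univ _ _).symm
    _ = (1-x)^(noneF φ).card * ∏ v ∈ domF φ, wt x M v (φ v) := by
        rw [e3]
        congr 1
        rw [Finset.prod_congr e1 (fun v hv => ?_), Finset.prod_const]
        have hvn : φ v = none := by
          have h := hv; rw [noneF, Finset.mem_filter] at h; exact h.2
        rw [wt, if_pos hvn]
    _ = (1-x)^(noneF φ).card *
          ((∏ v ∈ (domF φ).filter (fun v => ∃ e ∈ M, v ∈ e), wt x M v (φ v)) *
            ∏ v ∈ (domF φ).filter (fun v => ¬∃ e ∈ M, v ∈ e), wt x M v (φ v)) := by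
        rw [Finset.prod_filter_mul_prod_filter_not (domF φ) _ _]
    _ = (1-x)^(noneF φ).card *
          x ^ ((domF φ).filter (fun v => ¬∃ e ∈ M, v ∈ e)).card := by
        congr 1
        rw [Finset.prod_eq_one (fun v hv => ?_), one_mul,
          Finset.prod_congr rfl (fun v hv => ?_), Finset.prod_const]
        · have hv' := Finset.mem_filter.1 hv
          have hd := (Finset.mem_filter.1 hv'.1).2
          rw [wt, if_neg hd, if_neg hv'.2]
        · have hv' := Finset.mem_filter.1 hv
          have hd := (Finset.mem_filter.1 hv'.1).2
          rw [wt, if_neg hd, if_pos hv'.2]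
    _ = (1-x)^(noneF φ).card * x^((S1 E φ).card + 2*((D2 E φ) \ M).card) := by
        congr 2
        have h2 := Finset.card_filter_add_card_filter_not
          (s := domF φ) (p := fun v => ∃ e ∈ M, v ∈ e)
        rw [e2] at h2
        have h3 := card_coveredF hE hME hM
        have h4 := card_domF hE hPhi
        have h5 := Finset.card_sdiff_add_card_eq_card hMD
        omega

end OmegaMD

open OmegaMD

theorem omega_eq_monomer_dimer {V : Type*} [Fintype V] [DecidableEq V]
    (G : SimpleGraph V) [DecidableRel G.Adj] :
    (1 - X : Polynomial ℤ) ^ (Fintype.card V) *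
        ∑ s ∈ G.edgeFinset.powerset,
          (-X : Polynomial ℤ) ^ s.card * ∏ i : V, (1 - (degIn s i : Polynomial ℤ))
      = (1 - X : Polynomial ℤ) ^ (G.edgeFinset.card) *
          ∑ M ∈ G.edgeFinset.powerset.filter (fun M => IsMatchingSet M),
            (-X : Polynomial ℤ) ^ M.card *
              ∏ i ∈ Finset.univ.filter (fun i : V => ¬∃ e ∈ M, i ∈ e),
                (1 + ((G.degree i : Polynomial ℤ) - 1) * X) := by
  set E := G.edgeFinset with hEdef
  have hE : ∀ e ∈ E, ¬e.IsDiag := fun e he =>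
    G.not_isDiag_of_mem_edgeSet (SimpleGraph.mem_edgeFinset.1 he)
  have hdeg : ∀ i : V, G.degree i = (E.filter (fun e => i ∈ e)).card := by
    intro i
    rw [← SimpleGraph.card_incidenceFinset_eq_degree]
    congr 1
    ext e
    simp [SimpleGraph.mem_incidenceFinset, SimpleGraph.incidenceSet, hEdef,
      SimpleGraph.mem_edgeFinset]
  have lhs_eq : (1 - X : Polynomial ℤ) ^ (Fintype.card V) *
        ∑ s ∈ E.powerset,
          (-X : Polynomial ℤ) ^ s.card * ∏ i : V, (1 - (degIn s i : Polynomial ℤ))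
      = (1 - X : Polynomial ℤ) ^ E.card *
          ∑ M ∈ E.powerset.filter (fun M => IsMatchingSet M),
            ∑ φ ∈ PhiM E M, Fw (X : Polynomial ℤ) E M φ := by
    calc (1 - X : Polynomial ℤ) ^ (Fintype.card V) *
          ∑ s ∈ E.powerset,
            (-X : Polynomial ℤ) ^ s.card * ∏ i : V, (1 - (degIn s i : Polynomial ℤ))
        = (1 - X : Polynomial ℤ) ^ (Fintype.card V) *
            ∑ s ∈ E.powerset, (-X : Polynomial ℤ) ^ s.card *
              ∑ φ ∈ Phi s, ∏ v, (if φ v = none then (1 : Polynomial ℤ) else -1) := by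
          congr 1
          exact Finset.sum_congr rfl (fun s _ => by rw [expand_prod_one_sub_deg])
      _ = (1 - X : Polynomial ℤ) ^ (Fintype.card V) *
            ∑ φ ∈ Phi E, (∏ v, (if φ v = none then (1 : Polynomial ℤ) else -1)) *
              ((-X : Polynomial ℤ)^(usedF E φ).card * ((-X) + 1)^((E \ usedF E φ).card)) := by
          rw [swap_sum]
      _ = ∑ φ ∈ Phi E, (1 - X : Polynomial ℤ) ^ (Fintype.card V) *
            ((-1)^(domF φ).card *
              ((-X : Polynomial ℤ)^(usedF E φ).card * (1 - X)^((E \ usedF E φ).card))) := by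
          rw [Finset.mul_sum]
          refine Finset.sum_congr rfl (fun φ _ => ?_)
          rw [sign_prod_eq]
          have hx : ((-X) + 1 : Polynomial ℤ) = 1 - X := by ring
          rw [hx]
      _ = ∑ φ ∈ Phi E, (1 - X : Polynomial ℤ) ^ E.card *
            ∑ M ∈ (D2 E φ).powerset, Fw (X : Polynomial ℤ) E M φ :=
          Finset.sum_congr rfl (fun φ hφ => lhs_phi_eq X hE hφ)
      _ = (1 - X : Polynomial ℤ) ^ E.card *
            ∑ φ ∈ Phi E, ∑ M ∈ (D2 E φ).powerset, Fw (X : Polynomial ℤ) E M φ :=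
          (Finset.mul_sum _ _ _).symm
      _ = (1 - X : Polynomial ℤ) ^ E.card *
            ∑ M ∈ E.powerset.filter (fun M => IsMatchingSet M),
              ∑ φ ∈ PhiM E M, Fw (X : Polynomial ℤ) E M φ := by
          rw [reindex X hE]
  have rhs_eq : (1 - X : Polynomial ℤ) ^ E.card *
        ∑ M ∈ E.powerset.filter (fun M => IsMatchingSet M),
          (-X : Polynomial ℤ) ^ M.card *
            ∏ i ∈ Finset.univ.filter (fun i : V => ¬∃ e ∈ M, i ∈ e),
              (1 + ((G.degree i : Polynomial ℤ) - 1) * X)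
      = (1 - X : Polynomial ℤ) ^ E.card *
          ∑ M ∈ E.powerset.filter (fun M => IsMatchingSet M),
            ∑ φ ∈ PhiM E M, Fw (X : Polynomial ℤ) E M φ := by
    congr 1
    refine Finset.sum_congr rfl (fun M hM => ?_)
    have hM' := Finset.mem_filter.1 hM
    have hME : M ⊆ E := Finset.mem_powerset.1 hM'.1
    have hmatch : IsMatchingSet M := hM'.2
    have step : ∏ i ∈ Finset.univ.filter (fun i : V => ¬∃ e ∈ M, i ∈ e),
          (1 + ((G.degree i : Polynomial ℤ) - 1) * X)
        = ∏ i ∈ Finset.univ.filter (fun i : V => ¬∃ e ∈ M, i ∈ e),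
            ((1 - X) + ((E.filter (fun e => i ∈ e)).card : Polynomial ℤ) * X) := by
      refine Finset.prod_congr rfl (fun i _ => ?_)
      rw [hdeg i]
      ring
    rw [step, rhs_expand X hmatch, Finset.mul_sum]
    refine Finset.sum_congr rfl (fun φ hφ => ?_)
    rw [wt_prod X hE hME hmatch hφ, Fw]
  rw [lhs_eq, ← rhs_eq]
end
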